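/- The ht-index of the n-level Koch hierarchy equals n: repeated head/tail breaks on {4^(k-1) copies of (1/3)^k : k = 1..n} performs exactly n-1 splits. -/

import Mathlib

/-- Triangle-size multiset of the n-iteration Koch curve. -/
def S (n : ℕ) : Multiset ℚ :=
  (Finset.Icc 1 n).sum (fun k => Multiset.replicate (4 ^ (k - 1)) ((1 / 3 : ℚ) ^ k))

/-- Arithmetic mean of a finite multiset of rationals. -/
def msMean (s : Multiset ℚ) : ℚ := s.sum / s.card

/-- One head/tail break: keep elements strictly above the mean. -/
def headOf (s : Multiset ℚ) : Multiset ℚ := s.filter (fun x => msMean s < x)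

lemma S_succ (m : ℕ) :
    S (m + 1) = S m + Multiset.replicate (4 ^ m) ((1 / 3 : ℚ) ^ (m + 1)) := by
  rw [S, S, Finset.sum_Icc_succ_top (by omega : 1 ≤ m + 1)]
  simp

lemma card_S (m : ℕ) : 3 * ((Multiset.card (S m) : ℚ)) = 4 ^ m - 1 := by
  induction m with
  | zero => simp [S]
  | succ m ih =>
      rw [S_succ]
      push_cast [Multiset.card_add, Multiset.card_replicate]
      push_cast at ih
      ring_nf
      ring_nf at ih
      nlinarith [ih]

lemma sum_S (m : ℕ) : (3 : ℚ) ^ m * (S m).sum = 4 ^ m - 3 ^ m := by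
  induction m with
  | zero => simp [S]
  | succ m ih =>
      rw [S_succ, Multiset.sum_add, Multiset.sum_replicate]
      rw [nsmul_eq_mul]
      push_cast
      have hinv : ((1 / 3 : ℚ) ^ (m + 1)) * 3 ^ (m + 1) = 1 := by
        rw [← mul_pow]; norm_num
      linear_combination (3 : ℚ) * ih + (4 : ℚ) ^ m * hinv

lemma card_S_pos (m : ℕ) (hm : 1 ≤ m) : (0 : ℚ) < (Multiset.card (S m) : ℚ) := by
  have h := card_S m
  have h4 : (4 : ℚ) ^ 1 ≤ 4 ^ m := pow_le_pow_right₀ (by norm_num) hm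
  nlinarith

/-- The key natural-number inequality `3^(n+1) ≤ 2·4^n + 1`. -/
lemma key_ineq (n : ℕ) : 3 ^ (n + 1) ≤ 2 * 4 ^ n + 1 := by
  induction n with
  | zero => norm_num
  | succ n ih =>
      have h1 : 1 ≤ 4 ^ n := Nat.one_le_pow _ _ (by norm_num)
      calc 3 ^ (n + 2) = 3 * 3 ^ (n + 1) := by ring
        _ ≤ 3 * (2 * 4 ^ n + 1) := by omega
        _ ≤ 2 * 4 ^ (n + 1) + 1 := by ring_nf; omega

lemma mean_lt (n k : ℕ) (hk : k < n) : msMean (S n) < (1 / 3 : ℚ) ^ k := by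
  have hn : 1 ≤ n := by omega
  have hc := card_S n
  have hs := sum_S n
  have hcpos := card_S_pos n hn
  rw [msMean, div_lt_iff₀ hcpos]
  -- goal : (S n).sum < (1/3)^k * card
  have h3n : (0 : ℚ) < 3 ^ n := by positivity
  rw [← mul_lt_mul_iff_right₀ h3n]
  have hsplit : (3 : ℚ) ^ n = 3 ^ k * 3 ^ (n - k) := by
    rw [← pow_add]; congr 1; omega
  have hinv : ((1 / 3 : ℚ) ^ k) * 3 ^ k = 1 := by
    rw [← mul_pow]; norm_num
  have h1 : (3 : ℚ) ≤ 3 ^ (n - k) := by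
    calc (3 : ℚ) = 3 ^ 1 := (pow_one 3).symm
      _ ≤ 3 ^ (n - k) := pow_le_pow_right₀ (by norm_num) (by omega)
  have h2 : (1 : ℚ) < 3 ^ n := by
    calc (1 : ℚ) < 3 ^ 1 := by norm_num
      _ ≤ 3 ^ n := pow_le_pow_right₀ (by norm_num) hn
  have h4 : (4 : ℚ) ≤ 4 ^ n := by
    calc (4 : ℚ) = 4 ^ 1 := (pow_one 4).symm
      _ ≤ 4 ^ n := pow_le_pow_right₀ (by norm_num) hn
  -- 3^n * sum = 4^n - 3^n ; 3 * card = 4^n - 1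
  -- RHS: 3^n * ((1/3)^k * card) = 3^(n-k) * card
  calc (3 : ℚ) ^ n * (S n).sum = 4 ^ n - 3 ^ n := hs
    _ < 3 ^ (n - k) * (Multiset.card (S n) : ℚ) := by nlinarith
    _ = (3 : ℚ) ^ n * ((1 / 3 : ℚ) ^ k * (Multiset.card (S n) : ℚ)) := by
        rw [hsplit]
        linear_combination (-(3 : ℚ) ^ (n - k) * (Multiset.card (S n) : ℚ)) * hinv

lemma not_mean_lt (n : ℕ) (hn : 1 ≤ n) : ¬ msMean (S n) < (1 / 3 : ℚ) ^ n := by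
  rw [not_lt, msMean, le_div_iff₀ (card_S_pos n hn)]
  have hc := card_S n
  have hs := sum_S n
  have h3n : (0 : ℚ) < 3 ^ n := by positivity
  rw [← mul_le_mul_iff_right₀ h3n]
  have hinv : ((1 / 3 : ℚ) ^ n) * 3 ^ n = 1 := by
    rw [← mul_pow]; norm_num
  have hkey : (3 : ℚ) ^ (n + 1) ≤ 2 * 4 ^ n + 1 := by
    have := key_ineq n
    exact_mod_cast Nat.cast_le.mpr this
  calc (3 : ℚ) ^ n * ((1 / 3 : ℚ) ^ n * (Multiset.card (S n) : ℚ))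
      = (Multiset.card (S n) : ℚ) := by
        rw [← mul_assoc, mul_comm ((3:ℚ)^n), hinv, one_mul]
    _ ≤ 4 ^ n - 3 ^ n := by
        have : (3:ℚ)^(n+1) = 3 * 3^n := by ring
        nlinarith
    _ = (3 : ℚ) ^ n * (S n).sum := hs.symm

lemma filter_finset_sum (p : ℚ → Prop) [DecidablePred p] (s : Finset ℕ)
    (f : ℕ → Multiset ℚ) :
    (s.sum f).filter p = s.sum (fun i => (f i).filter p) := by
  classical
  induction s using Finset.induction_on with
  | empty => simp
  | insert a s ha ih =>
      rw [Finset.sum_insert ha, Finset.sum_insert ha, Multiset.filter_add, ih]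

lemma filter_replicate (p : ℚ → Prop) [DecidablePred p] (n : ℕ) (a : ℚ) :
    (Multiset.replicate n a).filter p
      = if p a then Multiset.replicate n a else 0 := by
  induction n with
  | zero => simp
  | succ n ih =>
      rw [Multiset.replicate_succ, Multiset.filter_cons, ih]
      by_cases h : p a <;> simp [h, Multiset.replicate_succ]

lemma head_S (m : ℕ) : headOf (S m) = S (m - 1) := by
  cases m with
  | zero =>
      have : S 0 = 0 := by simp [S]
      simp [headOf, this]
  | succ m =>
      rw [headOf]
      set μ := msMean (S (m + 1)) with hμ
      rw [show S (m + 1) = (Finset.Icc 1 (m+1)).sum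
          (fun k => Multiset.replicate (4 ^ (k - 1)) ((1 / 3 : ℚ) ^ k)) from rfl,
        filter_finset_sum]
      rw [Finset.sum_Icc_succ_top (by omega : 1 ≤ m + 1)]
      rw [filter_replicate]
      rw [if_neg (show ¬ μ < (1/3:ℚ)^(m+1) by
        rw [hμ]; exact not_mean_lt (m+1) (by omega))]
      rw [add_zero]
      show _ = S m
      rw [S]
      apply Finset.sum_congr rfl
      intro k hk
      rw [Finset.mem_Icc] at hk
      rw [filter_replicate, if_pos (show μ < (1/3:ℚ)^k by
        rw [hμ]; exact mean_lt (m+1) k (by omega))]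

lemma iter_head (i n : ℕ) : (headOf^[i]) (S n) = S (n - i) := by
  induction i generalizing n with
  | zero => simp
  | succ i ih =>
      rw [Function.iterate_succ_apply, head_S, ih]
      congr 1
      omega

lemma mem_S (n k : ℕ) (h1 : 1 ≤ k) (h2 : k ≤ n) : ((1 / 3 : ℚ) ^ k) ∈ S n := by
  rw [S, Multiset.mem_sum]
  exact ⟨k, Finset.mem_Icc.mpr ⟨h1, h2⟩,
    Multiset.mem_replicate.mpr ⟨by positivity, rfl⟩⟩

lemma two_le_dedup (m : ℕ) (hm : 2 ≤ m) : 2 ≤ (S m).dedup.card := by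
  have h1 : ((1 / 3 : ℚ) ^ 1) ∈ S m := mem_S m 1 le_rfl (by omega)
  have h2 : ((1 / 3 : ℚ) ^ 2) ∈ S m := mem_S m 2 (by omega) hm
  have hne : ((1 / 3 : ℚ) ^ 1) ≠ ((1 / 3 : ℚ) ^ 2) := by norm_num
  have : 1 < (S m).toFinset.card := by
    apply Finset.one_lt_card.mpr
    exact ⟨_, Multiset.mem_toFinset.mpr h1, _, Multiset.mem_toFinset.mpr h2, hne⟩
  simpa [Multiset.toFinset, Finset.card] using Nat.succ_le_of_lt this

lemma dedup_S_one : (S 1).dedup.card ≤ 1 := by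
  have : S 1 = Multiset.replicate 1 ((1 / 3 : ℚ) ^ 1) := by
    rw [S, Finset.Icc_self, Finset.sum_singleton]; norm_num
  rw [this]
  simp

/-- Repeated head/tail breaks on S n performs exactly n - 1 splits
(each pre-split multiset has ≥ 2 distinct values, and after n-1 splits at most 1),
so the ht-index is (n-1) + 1 = n. -/
theorem koch_ht_index_eq_levels (n : ℕ) (hn : 1 ≤ n) :
    (∀ i, i < n - 1 → 2 ≤ ((headOf^[i]) (S n)).dedup.card) ∧
    ((headOf^[n - 1]) (S n)).dedup.card ≤ 1 ∧
    (n - 1) + 1 = n := by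
  refine ⟨fun i hi => ?_, ?_, by omega⟩
  · rw [iter_head]
    exact two_le_dedup _ (by omega)
  · rw [iter_head]
    have : n - (n - 1) = 1 := by omega
    rw [this]
    exact dedup_S_one
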